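/- Let h : ℕ → ℕ be monotone and inflationary, n ∈ ℕ, and N0 ≥ n + 1. Then every (N0,h)-controlled strictly descending sequence of ordinals below ω^{n+1} has length at most h_{ω^{n+1}}(N0), and there exists an (N0,h)-controlled strictly descending sequence of ordinals below ω^{n+1} of length exactly h_{ω^{n+1}}(N0), where (h_α)_{α≤ω^ω} is the Cichoń hierarchy relative to h. -/

import Mathlib

noncomputable section

namespace HardyCNF

open Ordinal

/-- Find the first nonzero entry of a (little-endian) coefficient list:
returns `(k, c, rest)` when the list is `replicate k 0 ++ (c+1) :: rest`. -/
def splitNZ : List ℕ → Option (ℕ × ℕ × List ℕ)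
  | [] => none
  | 0 :: t => (splitNZ t).map (fun x => (x.1 + 1, x.2))
  | (c+1) :: t => some (0, c, t)

theorem splitNZ_eq : ∀ {ℓ : List ℕ} {k c : ℕ} {r : List ℕ},
    splitNZ ℓ = some (k, c, r) → ℓ = List.replicate k 0 ++ (c+1) :: r := by
  intro ℓ
  induction ℓ with
  | nil => intro k c r h; simp [splitNZ] at h
  | cons hd t ih =>
    intro k c r h
    match hd with
    | 0 =>
      simp only [splitNZ, Option.map_eq_some_iff] at h
      obtain ⟨⟨k', c', r'⟩, hs, he⟩ := h
      obtain ⟨h1, h2, h3⟩ : k' + 1 = k ∧ c' = c ∧ r' = r := by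
        simpa using he
      subst h1 h2 h3
      simp [List.replicate_succ, ih hs]
    | c'+1 =>
      simp only [splitNZ, Option.some.injEq] at h
      obtain ⟨h1, h2, h3⟩ : (0 : ℕ) = k ∧ c' = c ∧ t = r := by simpa using h
      subst h1 h2 h3
      simp

/-- The ordinal `ω^0·c_0 + ω^1·c_1 + ⋯` denoted by a little-endian coefficient list. -/
def toOrd : List ℕ → Ordinal.{0}
  | [] => 0
  | c :: ℓ => omega0 * toOrd ℓ + c

theorem toOrd_replicate_zero_append (k : ℕ) (ℓ : List ℕ) :
    toOrd (List.replicate k 0 ++ ℓ) = omega0 ^ (k : Ordinal) * toOrd ℓ := by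
  induction k with
  | zero => simp [toOrd]
  | succ n ih =>
    rw [List.replicate_succ, List.cons_append]
    show omega0 * toOrd (List.replicate n 0 ++ ℓ) + (0:ℕ) = _
    rw [ih]
    have hcast : ((n+1 : ℕ) : Ordinal) = 1 + (n : Ordinal) := by
      have : ((1+n : ℕ) : Ordinal) = 1 + (n : Ordinal) := by push_cast; ring_nf
      rw [← this, Nat.add_comm]
    rw [hcast, opow_add, opow_one, mul_assoc]
    simp

theorem toOrd_succ_lt (c : ℕ) (ℓ : List ℕ) : toOrd (c :: ℓ) < toOrd ((c+1) :: ℓ) := by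
  show omega0 * toOrd ℓ + (c : Ordinal) < omega0 * toOrd ℓ + ((c:ℕ)+1 : ℕ)
  apply add_lt_add_of_le_of_lt le_rfl
  push_cast
  exact lt_add_one _

theorem toOrd_limit_lt (x k c : ℕ) (r : List ℕ) :
    toOrd (List.replicate k 0 ++ (x+1) :: c :: r) <
      toOrd (0 :: (List.replicate k 0 ++ (c+1) :: r)) := by
  have h0 : toOrd (0 :: (List.replicate k 0 ++ (c+1) :: r))
      = omega0 * (omega0 ^ (k : Ordinal) * toOrd ((c+1) :: r)) := by
    show omega0 * toOrd (List.replicate k 0 ++ (c+1) :: r) + (0:ℕ) = _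
    rw [toOrd_replicate_zero_append]; simp
  have hsw : omega0 * omega0 ^ (k : Ordinal) = omega0 ^ (k : Ordinal) * omega0 := by
    have hcast : ((k+1 : ℕ) : Ordinal) = 1 + (k : Ordinal) := by
      have : ((1+k : ℕ) : Ordinal) = 1 + (k : Ordinal) := by push_cast; ring_nf
      rw [← this, Nat.add_comm]
    have h1 : omega0 * omega0 ^ (k : Ordinal) = omega0 ^ ((k+1 : ℕ) : Ordinal) := by
      rw [hcast, opow_add, opow_one]
    have h2 : omega0 ^ (k : Ordinal) * omega0 = omega0 ^ ((k+1 : ℕ) : Ordinal) := by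
      push_cast
      rw [opow_add, opow_one]
    rw [h1, h2]
  rw [h0, toOrd_replicate_zero_append, ← mul_assoc, hsw, mul_assoc]
  refine mul_lt_mul_of_pos_left ?_ (opow_pos (k : Ordinal) omega0_pos)
  show omega0 * toOrd (c :: r) + ((x:ℕ)+1 : ℕ) < omega0 * toOrd ((c+1) :: r)
  have hc : toOrd ((c+1) :: r) = toOrd (c :: r) + 1 := by
    show omega0 * toOrd r + ((c:ℕ)+1:ℕ) = (omega0 * toOrd r + c) + 1
    push_cast; rw [add_assoc]
  rw [hc, mul_add, mul_one]
  apply add_lt_add_of_le_of_lt le_rfl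
  exact nat_lt_omega0 (x+1)

/-- The Hardy hierarchy `h^α` relative to `h`, for `α < ω^ω` given in Cantor normal
form by a little-endian coefficient list:  `h^0(x) = x`, `h^{α+1}(x) = h^α(h x)`,
`h^λ(x) = h^{λ(x)}(x)` with the standard fundamental sequences. -/
def hardy (h : ℕ → ℕ) : List ℕ → ℕ → ℕ
  | [], x => x
  | (c+1) :: ℓ, x => hardy h (c :: ℓ) (h x)
  | 0 :: ℓ, x =>
    match hs : splitNZ ℓ with
    | none => x
    | some (k, c, r) => hardy h (List.replicate k 0 ++ (x+1) :: c :: r) x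
  termination_by ℓ _ => toOrd ℓ
  decreasing_by
  · exact toOrd_succ_lt c ℓ
  · rw [splitNZ_eq hs]; exact toOrd_limit_lt x k c r

/-- The Cichoń hierarchy `h_α` relative to `h`:  `h_0(x) = 0`,
`h_{α+1}(x) = 1 + h_α(h x)`, `h_λ(x) = h_{λ(x)}(x)`. -/
def cichon (h : ℕ → ℕ) : List ℕ → ℕ → ℕ
  | [], _ => 0
  | (c+1) :: ℓ, x => 1 + cichon h (c :: ℓ) (h x)
  | 0 :: ℓ, x =>
    match hs : splitNZ ℓ with
    | none => 0
    | some (k, c, r) => cichon h (List.replicate k 0 ++ (x+1) :: c :: r) x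
  termination_by ℓ _ => toOrd ℓ
  decreasing_by
  · exact toOrd_succ_lt c ℓ
  · rw [splitNZ_eq hs]; exact toOrd_limit_lt x k c r

/-- An ordinal index `≤ ω^ω`: either `α < ω^ω` given by its CNF coefficient list,
or `ω^ω` itself (represented by `none`). -/
abbrev OrdIdx := Option (List ℕ)

/-- the CNF coefficient list of `ω^k` -/
def omegaPow (k : ℕ) : List ℕ := List.replicate k 0 ++ [1]

/-- Hardy hierarchy for indices `α ≤ ω^ω`, using `ω^ω(x) = ω^{x+1}`. -/
def hardyTop (h : ℕ → ℕ) : OrdIdx → ℕ → ℕ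
  | some ℓ, x => hardy h ℓ x
  | none, x => hardy h (omegaPow (x+1)) x

/-- Cichoń hierarchy for indices `α ≤ ω^ω`. -/
def cichonTop (h : ℕ → ℕ) : OrdIdx → ℕ → ℕ
  | some ℓ, x => cichon h ℓ x
  | none, x => cichon h (omegaPow (x+1)) x

end HardyCNF

namespace HardyCNF

/-- The degree (largest exponent with a nonzero coefficient) of the ordinal with
little-endian CNF coefficient list `ℓ` (0 for the ordinal 0). -/
def degree (ℓ : List ℕ) : ℕ :=
  ((List.range ℓ.length).filter (fun i => ℓ.getD i 0 ≠ 0)).foldr max 0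

/-- The size `‖α‖ = max {n, c_0, …, c_n}` of an ordinal
`α = ω^n·c_n + ⋯ + ω^0·c_0 < ω^ω`. -/
def cnfNorm (ℓ : List ℕ) : ℕ := max (degree ℓ) (ℓ.foldr max 0)

end HardyCNF
namespace HardyCNF
open Ordinal

/-! ### Basic toOrd lemmas -/

theorem toOrd_nil : toOrd [] = 0 := rfl

theorem toOrd_cons (c : ℕ) (t : List ℕ) : toOrd (c :: t) = omega0 * toOrd t + c := rfl

theorem toOrd_succ_head (c : ℕ) (r : List ℕ) : toOrd ((c+1) :: r) = toOrd (c :: r) + 1 := by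
  rw [toOrd_cons, toOrd_cons]
  push_cast
  rw [add_assoc]

theorem toOrd_cons_succ_ne_zero (c : ℕ) (t : List ℕ) : toOrd ((c+1) :: t) ≠ 0 := by
  rw [toOrd_succ_head, Ordinal.add_one_eq_succ]
  exact Ordinal.succ_ne_zero _

theorem cons_lt_cons (a b : ℕ) {L1 L2 : List ℕ} (hlt : toOrd L1 < toOrd L2) :
    toOrd (a :: L1) < toOrd (b :: L2) := by
  rw [toOrd_cons, toOrd_cons]
  calc omega0 * toOrd L1 + a < omega0 * toOrd L1 + omega0 :=
        add_lt_add_of_le_of_lt le_rfl (nat_lt_omega0 a)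
    _ = omega0 * (toOrd L1 + 1) := (mul_add_one _ _).symm
    _ ≤ omega0 * toOrd L2 := by
        apply mul_le_mul_right
        rw [Ordinal.add_one_eq_succ]
        exact Order.succ_le_of_lt hlt
    _ ≤ omega0 * toOrd L2 + b := le_self_add

theorem splitNZ_replicate (k d : ℕ) (r : List ℕ) :
    splitNZ (List.replicate k 0 ++ (d+1) :: r) = some (k, d, r) := by
  induction k with
  | zero => simp [splitNZ]
  | succ n ih => rw [List.replicate_succ, List.cons_append]; simp [splitNZ, ih]

theorem splitNZ_none_toOrd {t : List ℕ} (hs : splitNZ t = none) : toOrd t = 0 := by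
  induction t with
  | nil => rfl
  | cons hd t ih =>
    match hd with
    | 0 =>
      simp only [splitNZ, Option.map_eq_none_iff] at hs
      rw [toOrd_cons, ih hs]
      simp
    | c+1 => simp [splitNZ] at hs

theorem omega_pow_succ (n : ℕ) :
    omega0 ^ ((n+1 : ℕ) : Ordinal) = omega0 * omega0 ^ (n : Ordinal) := by
  have hcast : ((n+1 : ℕ) : Ordinal) = 1 + (n : Ordinal) := by
    have : ((1+n : ℕ) : Ordinal) = 1 + (n : Ordinal) := by push_cast; ring_nf
    rw [← this, Nat.add_comm]
  rw [hcast, opow_add, opow_one]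

theorem toOrd_rep_append (x K : ℕ) (L : List ℕ) :
    toOrd (List.replicate K x ++ L) =
      omega0 ^ (K : Ordinal) * toOrd L + toOrd (List.replicate K x) := by
  induction K with
  | zero => simp [toOrd_nil]
  | succ n ih =>
    rw [List.replicate_succ, List.cons_append, toOrd_cons, ih, toOrd_cons,
      mul_add, ← mul_assoc, add_assoc, omega_pow_succ]

theorem toOrd_rep_zero (K : ℕ) : toOrd (List.replicate K 0) = 0 := by
  induction K with
  | zero => rfl
  | succ n ih => rw [List.replicate_succ, toOrd_cons, ih]; simp

/-- toOrd of the list `replicate k 0 ++ (c+1) :: r` as `ω^k * (C+1)`. -/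
theorem toOrd_limit_form (k c : ℕ) (r : List ℕ) :
    toOrd (List.replicate k 0 ++ (c+1) :: r) =
      omega0 ^ (k : Ordinal) * (toOrd (c :: r) + 1) := by
  rw [toOrd_rep_append, toOrd_rep_zero, add_zero, toOrd_succ_head]

/-! ### The pointwise predecessor `P` -/

/-- `P x ℓ` is the largest ordinal `< ℓ` all of whose CNF coefficients are `≤ x`. -/
def P (x : ℕ) : List ℕ → List ℕ
  | [] => []
  | (c+1) :: t => c :: t
  | 0 :: t =>
    match splitNZ t with
    | none => []
    | some (k, c, r) => List.replicate (k+1) x ++ c :: r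

theorem P_nil (x : ℕ) : P x [] = [] := rfl
theorem P_succ (x c : ℕ) (t : List ℕ) : P x ((c+1) :: t) = c :: t := rfl
theorem P_zero_none (x : ℕ) (t : List ℕ) (hs : splitNZ t = none) : P x (0 :: t) = [] := by
  simp [P, hs]
theorem P_zero_some (x k c : ℕ) (t r : List ℕ) (hs : splitNZ t = some (k, c, r)) :
    P x (0 :: t) = List.replicate (k+1) x ++ c :: r := by
  simp [P, hs]

theorem rep_lt_rep (x y : ℕ) (c : ℕ) (r : List ℕ) :
    ∀ K, toOrd (List.replicate K x ++ c :: r) < toOrd (List.replicate K y ++ (c+1) :: r)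
  | 0 => by simpa using toOrd_succ_lt c r
  | K+1 => by
    rw [List.replicate_succ (n := K), List.replicate_succ (n := K),
      List.cons_append, List.cons_append]
    exact cons_lt_cons x y (rep_lt_rep x y c r K)

theorem P_lt {ℓ : List ℕ} (hne : toOrd ℓ ≠ 0) (x : ℕ) : toOrd (P x ℓ) < toOrd ℓ := by
  match ℓ with
  | [] => exact absurd rfl hne
  | (c+1) :: t => rw [P_succ]; exact toOrd_succ_lt c t
  | 0 :: t =>
    cases hs : splitNZ t with
    | none =>
      exfalso; apply hne
      rw [toOrd_cons, splitNZ_none_toOrd hs]; simp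
    | some v =>
      obtain ⟨k, c, r⟩ := v
      rw [P_zero_some x k c t r hs]
      have ht : (0 : ℕ) :: t = List.replicate (k+1) 0 ++ (c+1) :: r := by
        rw [splitNZ_eq hs, List.replicate_succ, List.cons_append]
      rw [ht]
      exact rep_lt_rep x 0 c r (k+1)

/-! ### esize : max entry -/

def esize (L : List ℕ) : ℕ := L.foldr max 0

theorem esize_nil : esize [] = 0 := rfl
theorem esize_cons (a : ℕ) (t : List ℕ) : esize (a :: t) = max a (esize t) := rfl

theorem esize_rep_append_le (x K : ℕ) (L : List ℕ) :
    esize (List.replicate K x ++ L) ≤ max x (esize L) := by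
  induction K with
  | zero => simp [esize]
  | succ n ih =>
    rw [List.replicate_succ, List.cons_append, esize_cons]
    exact max_le (le_max_left _ _) ih

theorem esize_rep_zero_append (K : ℕ) (L : List ℕ) :
    esize (List.replicate K 0 ++ L) = esize L := by
  induction K with
  | zero => simp
  | succ n ih =>
    rw [List.replicate_succ, List.cons_append, esize_cons, ih]
    simp

theorem P_esize (x : ℕ) (ℓ : List ℕ) : esize (P x ℓ) ≤ max x (esize ℓ) := by
  match ℓ with
  | [] => simp [P_nil, esize_nil]
  | (c+1) :: t =>
    rw [P_succ, esize_cons, esize_cons]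
    exact max_le (le_max_of_le_right (le_max_of_le_left (Nat.le_succ c)))
      (le_max_of_le_right (le_max_right _ _))
  | 0 :: t =>
    cases hs : splitNZ t with
    | none => rw [P_zero_none x t hs]; simp [esize_nil]
    | some v =>
      obtain ⟨k, c, r⟩ := v
      rw [P_zero_some x k c t r hs]
      refine le_trans (esize_rep_append_le x (k+1) _) ?_
      have h2 : esize ((0:ℕ) :: t) = max (c+1) (esize r) := by
        rw [splitNZ_eq hs, esize_cons, esize_rep_zero_append, esize_cons]
        simp
      rw [esize_cons, h2]
      apply max_le (le_max_left _ _)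
      apply le_max_of_le_right
      exact max_le (le_max_of_le_left (Nat.le_succ c)) (le_max_right _ _)

theorem P_length (x : ℕ) (ℓ : List ℕ) : (P x ℓ).length ≤ ℓ.length := by
  match ℓ with
  | [] => simp [P_nil]
  | (c+1) :: t => rw [P_succ]; simp
  | 0 :: t =>
    cases hs : splitNZ t with
    | none => rw [P_zero_none x t hs]; simp
    | some v =>
      obtain ⟨k, c, r⟩ := v
      rw [P_zero_some x k c t r hs]
      have ht : ((0:ℕ) :: t).length = (List.replicate (k+1) 0 ++ (c+1) :: r).length := by
        rw [splitNZ_eq hs, List.replicate_succ, List.cons_append]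
      rw [ht]
      simp

/-! ### Maximality of P -/

theorem le_pow_of_lt_of_esize_le {x : ℕ} :
    ∀ (K : ℕ) (m : List ℕ) (C : Ordinal),
      toOrd m < omega0 ^ (K : Ordinal) * (C + 1) → esize m ≤ x →
      toOrd m ≤ omega0 ^ (K : Ordinal) * C + toOrd (List.replicate K x)
  | 0, m, C, hlt, _ => by
    simp only [Nat.cast_zero, opow_zero, one_mul] at hlt ⊢
    rw [List.replicate_zero, toOrd_nil, add_zero]
    rw [Ordinal.add_one_eq_succ] at hlt
    exact Order.lt_succ_iff.mp hlt
  | K+1, [], C, hlt, _ => by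
    rw [toOrd_nil]
    exact zero_le
  | K+1, a :: t, C, hlt, hsz => by
    rw [toOrd_cons]
    rw [esize_cons] at hsz
    have hax : a ≤ x := le_trans (le_max_left _ _) hsz
    have hts : esize t ≤ x := le_trans (le_max_right a _) hsz
    have hlt' : toOrd t < omega0 ^ (K : Ordinal) * (C + 1) := by
      have h1 : omega0 * toOrd t ≤ toOrd (a :: t) := le_self_add
      have h2 : omega0 * toOrd t < omega0 * (omega0 ^ (K : Ordinal) * (C + 1)) := by
        apply lt_of_le_of_lt h1
        rw [omega_pow_succ, mul_assoc] at hlt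
        exact hlt
      exact lt_of_not_ge fun hle => absurd h2 (not_lt_of_ge (mul_le_mul_right hle _))
    have ih := le_pow_of_lt_of_esize_le K t C hlt' hts
    calc omega0 * toOrd t + (a : Ordinal)
        ≤ omega0 * (omega0 ^ (K : Ordinal) * C + toOrd (List.replicate K x)) + (a : Ordinal) := by
          exact add_le_add_left (mul_le_mul_right ih _) _
      _ = omega0 ^ ((K+1 : ℕ) : Ordinal) * C +
            (omega0 * toOrd (List.replicate K x) + (a : Ordinal)) := by
          rw [mul_add, ← mul_assoc, add_assoc, omega_pow_succ]
      _ ≤ omega0 ^ ((K+1 : ℕ) : Ordinal) * C + toOrd (List.replicate (K+1) x) := by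
          apply add_le_add_right
          rw [List.replicate_succ, toOrd_cons]
          exact add_le_add_right (by exact_mod_cast Nat.cast_le.mpr hax) _
  termination_by K => K

theorem P_max {m ℓ : List ℕ} {x : ℕ} (hlt : toOrd m < toOrd ℓ) (hsz : esize m ≤ x) :
    toOrd m ≤ toOrd (P x ℓ) := by
  match ℓ with
  | [] => exact absurd hlt (by rw [toOrd_nil]; exact not_lt_of_ge zero_le)
  | (c+1) :: t =>
    rw [P_succ]
    rw [toOrd_succ_head, Ordinal.add_one_eq_succ] at hlt
    exact Order.lt_succ_iff.mp hlt
  | 0 :: t =>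
    cases hs : splitNZ t with
    | none =>
      exfalso
      have : toOrd ((0:ℕ) :: t) = 0 := by
        rw [toOrd_cons, splitNZ_none_toOrd hs]; simp
      rw [this] at hlt
      exact not_lt_of_ge zero_le hlt
    | some v =>
      obtain ⟨k, c, r⟩ := v
      have ht : (0 : ℕ) :: t = List.replicate (k+1) 0 ++ (c+1) :: r := by
        rw [splitNZ_eq hs, List.replicate_succ, List.cons_append]
      rw [ht, toOrd_limit_form] at hlt
      rw [P_zero_some x k c t r hs, toOrd_rep_append]
      exact le_pow_of_lt_of_esize_le (k+1) m (toOrd (c :: r)) hlt hsz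

end HardyCNF
namespace HardyCNF
open Ordinal

/-! ### cichon equations -/

theorem cichon_nil (h : ℕ → ℕ) (x : ℕ) : cichon h [] x = 0 := by rw [cichon]

theorem cichon_succ (h : ℕ → ℕ) (c x : ℕ) (t : List ℕ) :
    cichon h ((c+1) :: t) x = 1 + cichon h (c :: t) (h x) := by rw [cichon]

theorem cichon_zero_none (h : ℕ → ℕ) (x : ℕ) (t : List ℕ) (hs : splitNZ t = none) :
    cichon h (0 :: t) x = 0 := by rw [cichon, hs]

theorem cichon_zero_some (h : ℕ → ℕ) (x k c : ℕ) (t r : List ℕ)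
    (hs : splitNZ t = some (k, c, r)) :
    cichon h (0 :: t) x = cichon h (List.replicate k 0 ++ (x+1) :: c :: r) x := by
  rw [cichon, hs]

theorem cichon_zero {h : ℕ → ℕ} {ℓ : List ℕ} (h0 : toOrd ℓ = 0) (x : ℕ) :
    cichon h ℓ x = 0 := by
  match ℓ with
  | [] => exact cichon_nil h x
  | (c+1) :: t => exact absurd h0 (toOrd_cons_succ_ne_zero c t)
  | 0 :: t =>
    cases hs : splitNZ t with
    | none => exact cichon_zero_none h x t hs
    | some v =>
      obtain ⟨k, c, r⟩ := v
      exfalso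
      rw [toOrd_cons, Nat.cast_zero, add_zero, mul_eq_zero] at h0
      rcases h0 with h0 | h0
      · exact omega0_ne_zero h0
      · rw [splitNZ_eq hs, toOrd_limit_form] at h0
        rw [mul_eq_zero] at h0
        rcases h0 with h0 | h0
        · exact (opow_ne_zero _ omega0_ne_zero) h0
        · rw [Ordinal.add_one_eq_succ] at h0
          exact (Ordinal.succ_ne_zero _) h0

theorem toOrd_ne_zero_of_cichon_pos {h : ℕ → ℕ} {ℓ : List ℕ} {x : ℕ}
    (hpos : 0 < cichon h ℓ x) : toOrd ℓ ≠ 0 := by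
  intro h0
  rw [cichon_zero h0] at hpos
  exact Nat.lt_irrefl 0 hpos

theorem cichon_aux (h : ℕ → ℕ) :
    ∀ (k : ℕ) (c x : ℕ) (r : List ℕ),
      cichon h (List.replicate k 0 ++ (x+1) :: c :: r) x =
        1 + cichon h (x :: (List.replicate k x ++ c :: r)) (h x)
  | 0, c, x, r => by
    simp only [List.replicate_zero, List.nil_append]
    exact cichon_succ h x x (c :: r)
  | k+1, c, x, r => by
    rw [List.replicate_succ, List.cons_append]
    rw [cichon_zero_some h x k x _ (c :: r) (splitNZ_replicate k x (c :: r))]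
    rw [cichon_aux h k x x (c :: r)]
    congr 2
    rw [List.replicate_succ' (n := k)]
    simp

theorem cichon_step {h : ℕ → ℕ} {ℓ : List ℕ} (hne : toOrd ℓ ≠ 0) (x : ℕ) :
    cichon h ℓ x = 1 + cichon h (P x ℓ) (h x) := by
  match ℓ with
  | [] => exact absurd rfl hne
  | (c+1) :: t => rw [cichon_succ, P_succ]
  | 0 :: t =>
    cases hs : splitNZ t with
    | none =>
      exfalso; apply hne
      rw [toOrd_cons, splitNZ_none_toOrd hs]; simp
    | some v =>
      obtain ⟨k, c, r⟩ := v
      rw [cichon_zero_some h x k c t r hs, cichon_aux h k c x r,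
        P_zero_some x k c t r hs, List.replicate_succ, List.cons_append]

/-! ### degree bound -/

theorem foldr_max_le {K : ℕ} : ∀ {M : List ℕ}, (∀ a ∈ M, a ≤ K) → M.foldr max 0 ≤ K
  | [], _ => Nat.zero_le K
  | a :: M, hmem => by
    rw [List.foldr_cons]
    exact max_le (hmem a (List.mem_cons_self))
      (foldr_max_le (fun b hb => hmem b (List.mem_cons_of_mem a hb)))

theorem degree_le_of_length {L : List ℕ} {K : ℕ} (hlen : L.length ≤ K + 1) :
    degree L ≤ K := by
  apply foldr_max_le
  intro a ha
  rw [List.mem_filter, List.mem_range] at ha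
  omega

theorem esize_le_cnfNorm (L : List ℕ) : esize L ≤ cnfNorm L := le_max_right _ _

theorem cnfNorm_le {L : List ℕ} {K : ℕ} (hlen : L.length ≤ K + 1) (hsz : esize L ≤ K) :
    cnfNorm L ≤ K := max_le (degree_le_of_length hlen) hsz

/-! ### iterates -/

theorem le_iterate {h : ℕ → ℕ} (hinfl : ∀ x, x ≤ h x) (i x : ℕ) : x ≤ h^[i] x := by
  induction i with
  | zero => simp
  | succ n ih =>
    rw [Function.iterate_succ_apply']
    exact le_trans ih (hinfl _)

/-! ### upper bound -/

theorem chain_le {f : ℕ → List ℕ} {L : ℕ}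
    (hd : ∀ i, i + 1 < L → toOrd (f (i + 1)) < toOrd (f i)) :
    ∀ i j, i ≤ j → j < L → toOrd (f j) ≤ toOrd (f i) := by
  intro i j hij
  induction j, hij using Nat.le_induction with
  | base => intro _; exact le_refl _
  | succ j hij ih =>
    intro hj
    exact le_trans (le_of_lt (hd j hj)) (ih (by omega))

theorem mainA (h : ℕ → ℕ) :
    ∀ (L : ℕ) (ℓ : List ℕ) (x : ℕ) (f : ℕ → List ℕ),
      (∀ i, i < L → toOrd (f i) < toOrd ℓ) →
      (∀ i, i + 1 < L → toOrd (f (i + 1)) < toOrd (f i)) →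
      (∀ i, i < L → cnfNorm (f i) ≤ h^[i] x) →
      L ≤ cichon h ℓ x := by
  intro L
  induction L with
  | zero => intro _ _ _ _ _ _; exact Nat.zero_le _
  | succ L ih =>
    intro ℓ x f hb hd hn
    have h0 : toOrd (f 0) < toOrd ℓ := hb 0 (Nat.succ_pos L)
    have hne : toOrd ℓ ≠ 0 := fun hz => by
      rw [hz] at h0; exact not_lt_of_ge zero_le h0
    have hf0 : toOrd (f 0) ≤ toOrd (P x ℓ) := by
      apply P_max h0
      refine le_trans (esize_le_cnfNorm _) ?_
      simpa using hn 0 (Nat.succ_pos L)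
    have hstep : L ≤ cichon h (P x ℓ) (h x) := by
      apply ih (P x ℓ) (h x) (fun i => f (i + 1))
      · intro i hi
        have h1lt : toOrd (f 1) < toOrd (f 0) := hd 0 (by omega)
        have : toOrd (f (i + 1)) ≤ toOrd (f 1) :=
          chain_le hd 1 (i + 1) (by omega) (by omega)
        exact lt_of_le_of_lt this (lt_of_lt_of_le h1lt hf0)
      · intro i hi
        exact hd (i + 1) (by omega)
      · intro i hi
        have := hn (i + 1) (by omega)
        rwa [Function.iterate_succ_apply] at this
    rw [cichon_step hne]
    omega

/-! ### lower bound : the extremal sequence -/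

def seqF (h : ℕ → ℕ) : List ℕ → ℕ → ℕ → List ℕ
  | ℓ, x, 0 => P x ℓ
  | ℓ, x, i+1 => seqF h (P x ℓ) (h x) i

theorem seqF_zero (h : ℕ → ℕ) (ℓ : List ℕ) (x : ℕ) : seqF h ℓ x 0 = P x ℓ := rfl
theorem seqF_succ (h : ℕ → ℕ) (ℓ : List ℕ) (x i : ℕ) :
    seqF h ℓ x (i+1) = seqF h (P x ℓ) (h x) i := rfl

theorem seqF_lt (h : ℕ → ℕ) :
    ∀ (i : ℕ) (ℓ : List ℕ) (x : ℕ), i < cichon h ℓ x → toOrd (seqF h ℓ x i) < toOrd ℓ := by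
  intro i
  induction i with
  | zero =>
    intro ℓ x hi
    exact P_lt (toOrd_ne_zero_of_cichon_pos hi) x
  | succ n ihn =>
    intro ℓ x hi
    have hne : toOrd ℓ ≠ 0 := toOrd_ne_zero_of_cichon_pos (Nat.lt_of_le_of_lt (Nat.zero_le _) hi)
    rw [cichon_step hne] at hi
    have hn' : n < cichon h (P x ℓ) (h x) := by omega
    rw [seqF_succ]
    exact lt_trans (ihn (P x ℓ) (h x) hn') (P_lt hne x)

theorem seqF_desc (h : ℕ → ℕ) :
    ∀ (i : ℕ) (ℓ : List ℕ) (x : ℕ), i + 1 < cichon h ℓ x →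
      toOrd (seqF h ℓ x (i + 1)) < toOrd (seqF h ℓ x i) := by
  intro i
  induction i with
  | zero =>
    intro ℓ x hi
    have hne : toOrd ℓ ≠ 0 := toOrd_ne_zero_of_cichon_pos (Nat.lt_of_le_of_lt (Nat.zero_le _) hi)
    rw [cichon_step hne] at hi
    have hpos : 0 < cichon h (P x ℓ) (h x) := by omega
    rw [seqF_succ, seqF_zero, seqF_zero]
    exact P_lt (toOrd_ne_zero_of_cichon_pos hpos) (h x)
  | succ n ihn =>
    intro ℓ x hi
    have hne : toOrd ℓ ≠ 0 := toOrd_ne_zero_of_cichon_pos (Nat.lt_of_le_of_lt (Nat.zero_le _) hi)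
    rw [cichon_step hne] at hi
    rw [seqF_succ, seqF_succ]
    exact ihn (P x ℓ) (h x) (by omega)

theorem seqF_length (h : ℕ → ℕ) :
    ∀ (i : ℕ) (ℓ : List ℕ) (x : ℕ), (seqF h ℓ x i).length ≤ ℓ.length := by
  intro i
  induction i with
  | zero => intro ℓ x; exact P_length x ℓ
  | succ n ihn =>
    intro ℓ x
    rw [seqF_succ]
    exact le_trans (ihn (P x ℓ) (h x)) (P_length x ℓ)

theorem seqF_esize {h : ℕ → ℕ} (hinfl : ∀ x, x ≤ h x) :
    ∀ (i : ℕ) (ℓ : List ℕ) (x : ℕ), esize (seqF h ℓ x i) ≤ max (h^[i] x) (esize ℓ) := by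
  intro i
  induction i with
  | zero =>
    intro ℓ x
    simpa [seqF_zero] using P_esize x ℓ
  | succ n ihn =>
    intro ℓ x
    rw [seqF_succ]
    refine le_trans (ihn (P x ℓ) (h x)) ?_
    rw [Function.iterate_succ_apply]
    apply max_le (le_max_left _ _)
    refine le_trans (P_esize x ℓ) (max_le ?_ (le_max_right _ _))
    exact le_max_of_le_left (le_trans (hinfl x) (le_iterate hinfl n (h x)))

/-! ### facts about omegaPow -/

theorem toOrd_omegaPow (K : ℕ) : toOrd (omegaPow K) = omega0 ^ (K : Ordinal) := by
  rw [omegaPow, toOrd_replicate_zero_append]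
  have : toOrd [1] = 1 := by rw [toOrd_cons, toOrd_nil]; simp
  rw [this, mul_one]

theorem length_omegaPow (K : ℕ) : (omegaPow K).length = K + 1 := by
  rw [omegaPow]; simp

theorem esize_omegaPow (K : ℕ) : esize (omegaPow K) = 1 := by
  rw [omegaPow, esize_rep_zero_append, esize_cons, esize_nil]
  simp

end HardyCNF

open HardyCNF in
/-- length function theorem.  Let `h` be monotone and inflationary
and `N0 ≥ n + 1`.  Every `(N0,h)`-controlled strictly descending sequence of
ordinals `< ω^{n+1}` has length at most `h_{ω^{n+1}}(N0)`, and some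
`(N0,h)`-controlled strictly descending sequence of ordinals `< ω^{n+1}` has
exactly that length.  (Ordinals `< ω^ω` are given by little-endian CNF coefficient
lists, and a sequence of length `L` is `f` restricted to indices `< L`.) -/
theorem length_function_theorem (h : ℕ → ℕ)
    (hmono : ∀ x y, x ≤ y → h x ≤ h y) (hinfl : ∀ x, x ≤ h x)
    (n N0 : ℕ) (hN0 : n + 1 ≤ N0) :
    (∀ (L : ℕ) (f : ℕ → List ℕ),
      (∀ i, i < L → toOrd (f i) < Ordinal.omega0 ^ ((n + 1 : ℕ) : Ordinal)) →
      (∀ i, i + 1 < L → toOrd (f (i + 1)) < toOrd (f i)) →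
      (∀ i, i < L → cnfNorm (f i) ≤ h^[i] N0) →
      L ≤ cichon h (omegaPow (n + 1)) N0) ∧
    (∃ f : ℕ → List ℕ,
      (∀ i, i < cichon h (omegaPow (n + 1)) N0 →
        toOrd (f i) < Ordinal.omega0 ^ ((n + 1 : ℕ) : Ordinal)) ∧
      (∀ i, i + 1 < cichon h (omegaPow (n + 1)) N0 → toOrd (f (i + 1)) < toOrd (f i)) ∧
      (∀ i, i < cichon h (omegaPow (n + 1)) N0 → cnfNorm (f i) ≤ h^[i] N0)) := by
  constructor
  · intro L f hb hd hn
    apply mainA h L (omegaPow (n+1)) N0 f ?_ hd hn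
    intro i hi
    rw [toOrd_omegaPow]
    exact hb i hi
  · refine ⟨seqF h (omegaPow (n+1)) N0, ?_, ?_, ?_⟩
    · intro i hi
      rw [← toOrd_omegaPow]
      exact seqF_lt h i _ N0 hi
    · intro i hi
      exact seqF_desc h i _ N0 hi
    · intro i _
      have hlen : (seqF h (omegaPow (n+1)) N0 i).length ≤ (n + 1) + 1 := by
        rw [← length_omegaPow (n+1)]
        exact seqF_length h i _ N0
      have hNi : N0 ≤ h^[i] N0 := le_iterate hinfl i N0
      apply cnfNorm_le
      · exact le_trans hlen (by omega)
      · refine le_trans (seqF_esize hinfl i _ N0) ?_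
        rw [esize_omegaPow]
        exact max_le (le_refl _) (by omega)
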